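/- Let c be a real number with 0 ≤ c < 1 and n a positive integer. Let G be the n×n real matrix with entries G_{ij} = c^{|i−j|} and H the n×n real matrix with entries H_{ij} = δ_{i,j+1} + δ_{j,i+1} + c(δ_{i,1}δ_{j,1} + δ_{i,n}δ_{j,n}). If v ∈ ℝ^n is nonzero, t is real with 1 − 2ct + c² ≠ 0, and H v = 2t·v, then G v = ((1−c²)/(1 − 2ct + c²))·v. In particular every eigenvector of H with eigenvalue 2cos θ is an eigenvector of G with eigenvalue (1−c²)/(1 − 2c·cos θ + c²). -/

import Mathlib

open Matrix BigOperators

/-- Delta-sum over `Fin n` with the condition on the coercion. -/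
lemma sum_if_coe {n : ℕ} (f : Fin n → ℝ) (m : ℕ) :
    (∑ j : Fin n, if (j : ℕ) = m then f j else 0) =
      if h : m < n then f ⟨m, h⟩ else 0 := by
  split
  · next h =>
    rw [Finset.sum_eq_single (⟨m, h⟩ : Fin n)]
    · simp
    · intro j _ hj
      rw [if_neg (fun hc => hj (Fin.ext hc))]
    · simp
  · next h =>
    apply Finset.sum_eq_zero
    intro j _
    rw [if_neg]
    have := j.2
    omega

/-- Delta-sum over `Fin n` with a shifted condition. -/
lemma sum_if_succ {n : ℕ} (f : Fin n → ℝ) (m : ℕ) :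
    (∑ j : Fin n, if (j : ℕ) + 1 = m then f j else 0) =
      if h : m - 1 < n ∧ 1 ≤ m then f ⟨m - 1, h.1⟩ else 0 := by
  split
  · next h =>
    rw [Finset.sum_eq_single (⟨m - 1, h.1⟩ : Fin n)]
    · rw [if_pos (show m - 1 + 1 = m by omega)]
    · intro j _ hj
      rw [if_neg]
      intro hc
      exact hj (Fin.ext (show (j : ℕ) = m - 1 by omega))
    · simp
  · next h =>
    apply Finset.sum_eq_zero
    intro j _
    rw [if_neg]
    have := j.2
    omega

/-- The scalar identity behind the tridiagonal inverse of the KMS matrix. -/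
lemma kms_arith (c : ℝ) (n iv kv : ℕ) (hn : 0 < n) (hi : iv < n) (hk : kv < n) :
    (1 + c ^ 2) * c ^ Nat.dist iv kv
      - c * (if _ : kv + 1 < n then c ^ Nat.dist iv (kv + 1) else 0)
      - c * (if h : kv - 1 < n ∧ 1 ≤ kv then c ^ Nat.dist iv (kv - 1) else 0)
      - (c ^ 2 * (if kv = 0 then 1 else 0)) * c ^ Nat.dist iv 0
      - (c ^ 2 * (if kv = n - 1 then 1 else 0)) * c ^ Nat.dist iv (n - 1)
      = (1 - c ^ 2) * (if iv = kv then 1 else 0) := by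
  by_cases hk0 : kv = 0
  · subst hk0
    by_cases hn1 : n = 1
    · subst hn1
      have hiv : iv = 0 := by omega
      subst hiv
      rw [dif_neg (by omega), dif_neg (by omega)]
      have d0 : Nat.dist 0 0 = 0 := by unfold Nat.dist; omega
      simp [d0]
    · -- kv = 0, n ≥ 2
      have h2 : 2 ≤ n := by omega
      rw [dif_pos (by omega), dif_neg (by omega), if_pos rfl, if_neg (by omega)]
      by_cases hiv : iv = 0
      · subst hiv
        have d1 : Nat.dist 0 1 = 1 := by unfold Nat.dist; omega
        have d0 : Nat.dist 0 0 = 0 := by unfold Nat.dist; omega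
        rw [d1, d0, if_pos rfl]
        ring
      · obtain ⟨a, ha⟩ : ∃ a, iv = a + 1 := ⟨iv - 1, by omega⟩
        have d1 : Nat.dist iv 1 = a := by unfold Nat.dist; omega
        have d0 : Nat.dist iv 0 = a + 1 := by unfold Nat.dist; omega
        rw [d1, d0, if_neg (by omega)]
        ring
  · by_cases hkn : kv = n - 1
    · -- kv = n-1, kv ≥ 1, so n ≥ 2
      have h2 : 2 ≤ n := by omega
      rw [dif_neg (by omega), dif_pos (by omega), if_neg hk0, if_pos hkn]
      by_cases hiv : iv = kv
      · subst hiv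
        have d0 : Nat.dist iv iv = 0 := by unfold Nat.dist; omega
        have d1 : Nat.dist iv (iv - 1) = 1 := by unfold Nat.dist; omega
        have d2 : Nat.dist iv (n - 1) = 0 := by unfold Nat.dist; omega
        rw [d0, d1, d2, if_pos rfl]
        ring
      · obtain ⟨a, ha⟩ : ∃ a, kv = iv + a + 1 := ⟨kv - iv - 1, by omega⟩
        have d0 : Nat.dist iv kv = a + 1 := by unfold Nat.dist; omega
        have d1 : Nat.dist iv (kv - 1) = a := by unfold Nat.dist; omega
        have d2 : Nat.dist iv (n - 1) = a + 1 := by unfold Nat.dist; omega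
        rw [d0, d1, d2, if_neg (by omega)]
        ring
    · -- interior: 1 ≤ kv, kv + 1 < n
      have h1 : 1 ≤ kv := by omega
      have h2 : kv + 1 < n := by omega
      rw [dif_pos h2, dif_pos (by omega), if_neg hk0, if_neg hkn]
      rcases lt_trichotomy iv kv with hlt | heq | hgt
      · obtain ⟨a, ha⟩ : ∃ a, kv = iv + a + 1 := ⟨kv - iv - 1, by omega⟩
        have d0 : Nat.dist iv kv = a + 1 := by unfold Nat.dist; omega
        have d1 : Nat.dist iv (kv + 1) = a + 2 := by unfold Nat.dist; omega
        have d2 : Nat.dist iv (kv - 1) = a := by unfold Nat.dist; omega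
        rw [d0, d1, d2, if_neg (by omega)]
        ring
      · subst heq
        have d0 : Nat.dist iv iv = 0 := by unfold Nat.dist; omega
        have d1 : Nat.dist iv (iv + 1) = 1 := by unfold Nat.dist; omega
        have d2 : Nat.dist iv (iv - 1) = 1 := by unfold Nat.dist; omega
        rw [d0, d1, d2, if_pos rfl]
        ring
      · obtain ⟨a, ha⟩ : ∃ a, iv = kv + a + 1 := ⟨iv - kv - 1, by omega⟩
        have d0 : Nat.dist iv kv = a + 1 := by unfold Nat.dist; omega
        have d1 : Nat.dist iv (kv + 1) = a := by unfold Nat.dist; omega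
        have d2 : Nat.dist iv (kv - 1) = a + 2 := by unfold Nat.dist; omega
        rw [d0, d1, d2, if_neg (by omega)]
        ring

/-- The KMS Gram matrix times its tridiagonal "inverse candidate". -/
lemma kms_inverse (c : ℝ) (n : ℕ) (hn : 0 < n)
    (G H : Matrix (Fin n) (Fin n) ℝ)
    (hGdef : ∀ i j, G i j = c ^ Nat.dist i.1 j.1)
    (hHdef : ∀ i j, H i j =
      (if i.1 = j.1 + 1 then 1 else 0) + (if j.1 = i.1 + 1 then 1 else 0)
        + c * ((if i.1 = 0 ∧ j.1 = 0 then 1 else 0)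
          + (if i.1 = n - 1 ∧ j.1 = n - 1 then 1 else 0))) :
    G * ((1 + c ^ 2) • (1 : Matrix (Fin n) (Fin n) ℝ) - c • H)
      = (1 - c ^ 2) • (1 : Matrix (Fin n) (Fin n) ℝ) := by
  ext i k
  rw [Matrix.mul_apply]
  have expand : ∀ j : Fin n,
      G i j * ((1 + c ^ 2) • (1 : Matrix (Fin n) (Fin n) ℝ) - c • H) j k
      = (1 + c ^ 2) * (if (j : ℕ) = (k : ℕ) then G i j else 0)
        - c * (if (j : ℕ) = (k : ℕ) + 1 then G i j else 0)
        - c * (if (j : ℕ) + 1 = (k : ℕ) then G i j else 0)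
        - (c ^ 2 * (if (k : ℕ) = 0 then 1 else 0)) * (if (j : ℕ) = 0 then G i j else 0)
        - (c ^ 2 * (if (k : ℕ) = n - 1 then 1 else 0))
            * (if (j : ℕ) = n - 1 then G i j else 0) := by
    intro j
    have e0 : ∀ (P : Prop) [Decidable P],
        (if P then G i j else 0) = G i j * (if P then (1 : ℝ) else 0) := by
      intro P _; split <;> simp
    simp only [Matrix.sub_apply, Matrix.smul_apply, Matrix.one_apply, hHdef,
      smul_eq_mul, Fin.ext_iff, e0]
    have e1 : (if (k : ℕ) = (j : ℕ) + 1 then (1 : ℝ) else 0)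
        = (if (j : ℕ) + 1 = (k : ℕ) then 1 else 0) := by
      by_cases h : (k : ℕ) = (j : ℕ) + 1
      · rw [if_pos h, if_pos h.symm]
      · rw [if_neg h, if_neg (fun hc => h hc.symm)]
    have e2 : (if (j : ℕ) = 0 ∧ (k : ℕ) = 0 then (1 : ℝ) else 0)
        = (if (k : ℕ) = 0 then 1 else 0) * (if (j : ℕ) = 0 then 1 else 0) := by
      by_cases h1 : (j : ℕ) = 0 <;> by_cases h2 : (k : ℕ) = 0 <;>
        simp [h1, h2]
    have e3 : (if (j : ℕ) = n - 1 ∧ (k : ℕ) = n - 1 then (1 : ℝ) else 0)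
        = (if (k : ℕ) = n - 1 then 1 else 0) * (if (j : ℕ) = n - 1 then 1 else 0) := by
      by_cases h1 : (j : ℕ) = n - 1 <;> by_cases h2 : (k : ℕ) = n - 1 <;>
        simp [h1, h2]
    rw [e1, e2, e3]
    ring
  rw [Finset.sum_congr rfl (fun j _ => expand j)]
  simp only [Finset.sum_sub_distrib, ← Finset.mul_sum]
  rw [sum_if_coe, sum_if_coe, sum_if_succ, sum_if_coe, sum_if_coe]
  rw [dif_pos k.2, dif_pos hn, dif_pos (Nat.sub_lt hn Nat.one_pos)]
  have hGik : G i k = c ^ Nat.dist i.1 k.1 := hGdef i k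
  have hrhs : ((1 - c ^ 2) • (1 : Matrix (Fin n) (Fin n) ℝ)) i k
      = (1 - c ^ 2) * (if (i : ℕ) = (k : ℕ) then 1 else 0) := by
    simp only [Matrix.smul_apply, Matrix.one_apply, smul_eq_mul, Fin.ext_iff]
  rw [hrhs]
  have := kms_arith c n i.1 k.1 hn i.2 k.2
  simpa only [hGdef] using this

/-- every eigenvector of `H` with eigenvalue `2t` is an eigenvector of the
Gram matrix `G` with eigenvalue `(1−c²)/(1−2ct+c²)`. -/
theorem eigenvector_of_H_is_eigenvector_of_G
    (c : ℝ) (hc0 : 0 ≤ c) (hc1 : c < 1) (n : ℕ) (hn : 0 < n)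
    (G H : Matrix (Fin n) (Fin n) ℝ)
    (hGdef : ∀ i j, G i j = c ^ Nat.dist i.1 j.1)
    (hHdef : ∀ i j, H i j =
      (if i.1 = j.1 + 1 then 1 else 0) + (if j.1 = i.1 + 1 then 1 else 0)
        + c * ((if i.1 = 0 ∧ j.1 = 0 then 1 else 0)
          + (if i.1 = n - 1 ∧ j.1 = n - 1 then 1 else 0)))
    (v : Fin n → ℝ) (hv : v ≠ 0)
    (t : ℝ) (ht : 1 - 2 * c * t + c ^ 2 ≠ 0)
    (hev : H.mulVec v = (2 * t) • v) :
    G.mulVec v = ((1 - c ^ 2) / (1 - 2 * c * t + c ^ 2)) • v := by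
  have key := kms_inverse c n hn G H hGdef hHdef
  set T : Matrix (Fin n) (Fin n) ℝ :=
    (1 + c ^ 2) • (1 : Matrix (Fin n) (Fin n) ℝ) - c • H with hT
  have hTv : T.mulVec v = (1 - 2 * c * t + c ^ 2) • v := by
    rw [hT, Matrix.sub_mulVec, Matrix.smul_mulVec, Matrix.smul_mulVec,
      Matrix.one_mulVec, hev]
    funext i
    simp only [Pi.sub_apply, Pi.smul_apply, smul_eq_mul]
    ring
  have h3 : (1 - 2 * c * t + c ^ 2) • G.mulVec v = (1 - c ^ 2) • v := by
    calc (1 - 2 * c * t + c ^ 2) • G.mulVec v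
        = G.mulVec ((1 - 2 * c * t + c ^ 2) • v) := by
          rw [Matrix.mulVec_smul]
      _ = G.mulVec (T.mulVec v) := by rw [hTv]
      _ = (G * T).mulVec v := (Matrix.mulVec_mulVec v G T)
      _ = ((1 - c ^ 2) • (1 : Matrix (Fin n) (Fin n) ℝ)).mulVec v := by rw [key]
      _ = (1 - c ^ 2) • v := by
          rw [Matrix.smul_mulVec, Matrix.one_mulVec]
  funext i
  have h4 := congrFun h3 i
  simp only [Pi.smul_apply, smul_eq_mul] at h4 ⊢
  rw [div_mul_eq_mul_div, eq_div_iff ht]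
  linarith [h4]
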